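/- Let H be an ℵ₀-monoid generated by two elements x₁, x₂ (every element equals α·x₁ + β·x₂ for some cardinals 0 ≤ α, β ≤ ℵ₀). Suppose add(x₁) = add(x₂). Then for any nonzero element y = α·x₁ + β·x₂ of H (with α + β ≥ 1), one has ℵ₀·y = ℵ₀·x₁. -/
import Mathlib


/-- An ℵ₀-monoid: a set with 0 and a countable summation map satisfying (A1) and (A2). -/
structure AlephMonoid (H : Type*) where
  zero : H
  sum : (ℕ → H) → H
  a1 : ∀ x : ℕ → H, (∀ i, i ≠ 0 → x i = zero) → sum x = x 0
  a2 : ∀ (x : ℕ × ℕ → H) (π : ℕ × ℕ ≃ ℕ),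
    sum (fun i => sum (fun j => x (i, j))) = sum (fun k => x (π.symm k))

namespace AlephMonoid

variable {H : Type*}

/-- The induced binary addition. -/
def add (M : AlephMonoid H) (a b : H) : H :=
  M.sum (fun i => if i = 0 then a else if i = 1 then b else M.zero)

/-- ℵ₀·a : the countable sum of copies of `a`. -/
def infMul (M : AlephMonoid H) (a : H) : H := M.sum (fun _ => a)

/-- n·a : finite multiples. -/
def nsmul (M : AlephMonoid H) : ℕ → H → H
  | 0, _ => M.zero
  | n + 1, a => M.add a (M.nsmul n a)

/-- `y ∈ add(x)` : `y` is a direct summand of a finite multiple of `x`. -/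
def inAdd (M : AlephMonoid H) (x y : H) : Prop :=
  ∃ z : H, ∃ n : ℕ, 1 ≤ n ∧ M.add y z = M.nsmul n x

/-- Multiplication by a cardinal α with 0 ≤ α ≤ ℵ₀ (`none` stands for ℵ₀). -/
def cmul (M : AlephMonoid H) : Option ℕ → H → H
  | some n, a => M.nsmul n a
  | none, a => M.infMul a

/-- The finite sum `Σ_{i=a}^{b} f i`, expressed via the countable sum of a
family supported on the interval `[a, b]`. -/
def intervalSum (M : AlephMonoid H) (f : ℕ → H) (a b : ℕ) : H :=
  M.sum (fun i => if a ≤ i ∧ i ≤ b then f i else M.zero)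

end AlephMonoid

namespace AMAux
open AlephMonoid

noncomputable def e : ℕ × ℕ ≃ ℕ := Nat.pairEquiv

def cf : ℕ × ℕ → ℕ × ℕ := fun p =>
  if p.1 = 0 ∧ p.2 = 1 then (1,0) else if p.1 = 1 ∧ p.2 = 0 then (1,1)
  else if p.1 = 1 ∧ p.2 = 1 then (0,1) else p

def cg : ℕ × ℕ → ℕ × ℕ := fun p =>
  if p.1 = 1 ∧ p.2 = 0 then (0,1) else if p.1 = 1 ∧ p.2 = 1 then (1,0)
  else if p.1 = 0 ∧ p.2 = 1 then (1,1) else p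

def cyc : ℕ × ℕ ≃ ℕ × ℕ where
  toFun := cf
  invFun := cg
  left_inv := by rintro ⟨i, j⟩; simp only [cf, cg]; split_ifs <;> simp_all
  right_inv := by rintro ⟨i, j⟩; simp only [cf, cg]; split_ifs <;> simp_all

def idf : ℕ × ℕ → ℕ × ℕ := fun p =>
  if p.2 = 0 then (p.1 % 2, p.1 / 2) else (p.2 + 1, p.1)

def idg : ℕ × ℕ → ℕ × ℕ := fun p =>
  if p.1 = 0 then (2 * p.2, 0) else if p.1 = 1 then (2 * p.2 + 1, 0) else (p.2, p.1 - 1)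

def rhoIdem : ℕ × ℕ ≃ ℕ × ℕ where
  toFun := idf
  invFun := idg
  left_inv := by rintro ⟨i, j⟩; simp only [idf, idg]; split_ifs <;> simp_all [Prod.ext_iff] <;> omega
  right_inv := by rintro ⟨i, j⟩; simp only [idf, idg]; split_ifs <;> simp_all [Prod.ext_iff] <;> omega

variable {H : Type*} (M : AlephMonoid H)

lemma sum_perm (f : ℕ → H) (σ : ℕ ≃ ℕ) : M.sum f = M.sum (fun k => f (σ k)) := by
  have h1 := M.a2 (fun p => f (e p)) e
  have h2 := M.a2 (fun p => f (e p)) (e.trans σ.symm)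
  simp only [Equiv.symm_apply_apply, Equiv.apply_symm_apply, Equiv.symm_trans_apply,
    Equiv.symm_symm] at h1 h2
  rw [← h1, h2]

lemma sumsum_congr (x y : ℕ × ℕ → H) (ρ : ℕ × ℕ ≃ ℕ × ℕ) (h : ∀ p, x p = y (ρ p)) :
    M.sum (fun i => M.sum (fun j => x (i, j))) = M.sum (fun i => M.sum (fun j => y (i, j))) := by
  have h1 := M.a2 x e
  have h2 := M.a2 y (ρ.symm.trans e)
  rw [h1, h2]
  congr 1
  funext k
  simp only [Equiv.symm_trans_apply, Equiv.symm_symm]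
  exact h (e.symm k)

lemma sum_zero : M.sum (fun _ => M.zero) = M.zero := M.a1 _ (fun _ _ => rfl)

lemma add_zero (a : H) : M.add a M.zero = a := by
  have := M.a1 (fun i => if i = 0 then a else if i = 1 then M.zero else M.zero)
    (by intro i hi; simp only [hi, if_false]; split <;> rfl)
  simpa [AlephMonoid.add] using this

lemma add_comm (a b : H) : M.add a b = M.add b a := by
  have := sum_perm M (fun i => if i = 0 then a else if i = 1 then b else M.zero)
    (Equiv.swap 0 1)
  rw [AlephMonoid.add, this, AlephMonoid.add]
  congr 1
  funext k
  rcases k with _ | _ | k <;> simp [Equiv.swap_apply_of_ne_of_ne]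

lemma zero_add (a : H) : M.add M.zero a = a := by rw [add_comm, add_zero]

lemma infMul_zero : M.infMul M.zero = M.zero := sum_zero M

lemma add_assoc (a b c : H) : M.add (M.add a b) c = M.add a (M.add b c) := by
  set X : ℕ × ℕ → H := fun p =>
    if p.1 = 0 ∧ p.2 = 0 then a else if p.1 = 0 ∧ p.2 = 1 then b
    else if p.1 = 1 ∧ p.2 = 0 then c else M.zero with hX
  set Y : ℕ × ℕ → H := fun p =>
    if p.1 = 0 ∧ p.2 = 0 then a else if p.1 = 1 ∧ p.2 = 0 then b
    else if p.1 = 1 ∧ p.2 = 1 then c else M.zero with hY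
  have hρ : ∀ p, X p = Y (cyc p) := by
    rintro ⟨i, j⟩
    simp only [hX, hY, cyc, Equiv.coe_fn_mk, cf]
    split_ifs <;> simp_all
  have key := sumsum_congr M X Y cyc hρ
  have lX : (fun i => M.sum (fun j => X (i, j))) =
      (fun i => if i = 0 then M.add a b else if i = 1 then c else M.zero) := by
    funext i
    rcases i with _ | _ | i
    · show M.sum _ = M.add a b
      rw [AlephMonoid.add]
      congr 1; funext j; rcases j with _ | _ | j <;> simp [hX]
    · rw [M.a1 (fun j => X (1, j)) (by intro j hj; simp [hX, hj])]; simp [hX]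
    · rw [M.a1 (fun j => X (i+2, j)) (by intro j hj; simp [hX])]; simp [hX]
  have lY : (fun i => M.sum (fun j => Y (i, j))) =
      (fun i => if i = 0 then a else if i = 1 then M.add b c else M.zero) := by
    funext i
    rcases i with _ | _ | i
    · rw [M.a1 (fun j => Y (0, j)) (by intro j hj; simp [hY, hj])]; simp [hY]
    · show M.sum _ = M.add b c
      rw [AlephMonoid.add]
      congr 1; funext j; rcases j with _ | _ | j <;> simp [hY]
    · rw [M.a1 (fun j => Y (i+2, j)) (by intro j hj; simp [hY])]; simp [hY]
  rw [lX, lY] at key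
  exact key

lemma infMul_add (a b : H) :
    M.infMul (M.add a b) = M.add (M.infMul a) (M.infMul b) := by
  set X : ℕ × ℕ → H := fun p =>
    if p.2 = 0 then a else if p.2 = 1 then b else M.zero with hX
  set Y : ℕ × ℕ → H := fun p =>
    if p.1 = 0 then a else if p.1 = 1 then b else M.zero with hY
  have hρ : ∀ p, X p = Y ((Equiv.prodComm ℕ ℕ) p) := by rintro ⟨i, j⟩; simp [hX, hY]
  have key := sumsum_congr M X Y (Equiv.prodComm ℕ ℕ) hρ
  have lX : (fun i => M.sum (fun j => X (i, j))) = (fun _ => M.add a b) := by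
    funext i; rfl
  have lY : (fun i => M.sum (fun j => Y (i, j))) =
      (fun i => if i = 0 then M.infMul a else if i = 1 then M.infMul b else M.zero) := by
    funext i
    rcases i with _ | _ | i
    · show M.sum (fun _ => a) = _; rfl
    · show M.sum (fun _ => b) = _; rfl
    · show M.sum (fun _ => M.zero) = _; simp [sum_zero]
  rw [lX, lY] at key
  exact key

lemma infMul_infMul (a : H) : M.infMul (M.infMul a) = M.infMul a := by
  have := M.a2 (fun _ => a) e
  exact this

lemma infMul_idem (a : H) : M.add (M.infMul a) (M.infMul a) = M.infMul a := by
  set X : ℕ × ℕ → H := fun p => if p.2 = 0 then a else M.zero with hX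
  set Y : ℕ × ℕ → H := fun p => if p.1 = 0 ∨ p.1 = 1 then a else M.zero with hY
  have hρ : ∀ p, X p = Y (rhoIdem p) := by
    rintro ⟨i, j⟩
    simp only [hX, hY, rhoIdem, Equiv.coe_fn_mk, idf]
    split_ifs <;> simp_all <;> omega
  have key := sumsum_congr M X Y rhoIdem hρ
  have lX : (fun i => M.sum (fun j => X (i, j))) = (fun _ => a) := by
    funext i
    rw [M.a1 (fun j => X (i, j)) (by intro j hj; simp [hX, hj])]
    simp [hX]
  have lY : (fun i => M.sum (fun j => Y (i, j))) =
      (fun i => if i = 0 then M.infMul a else if i = 1 then M.infMul a else M.zero) := by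
    funext i
    rcases i with _ | _ | i
    · show M.sum (fun _ => a) = _; rfl
    · show M.sum (fun _ => a) = _; rfl
    · show M.sum (fun _ => M.zero) = _; simp [sum_zero]
  rw [lX, lY] at key
  exact key.symm

lemma infMul_nsmul (a : H) (n : ℕ) (hn : 1 ≤ n) :
    M.infMul (M.nsmul n a) = M.infMul a := by
  induction n with
  | zero => omega
  | succ n ih =>
    rcases Nat.eq_zero_or_pos n with h | h
    · subst h
      show M.infMul (M.add a M.zero) = _
      rw [add_zero]
    · show M.infMul (M.add a (M.nsmul n a)) = _
      rw [infMul_add, ih h, infMul_idem]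

lemma infMul_x1_eq_x2 (x₁ x₂ : H)
    (haddeq : ∀ w : H, M.inAdd x₁ w ↔ M.inAdd x₂ w) :
    M.infMul x₂ = M.infMul x₁ := by
  have self1 : M.inAdd x₁ x₁ := ⟨M.zero, 1, le_refl 1, rfl⟩
  have self2 : M.inAdd x₂ x₂ := ⟨M.zero, 1, le_refl 1, rfl⟩
  obtain ⟨z, n, hn, hzn⟩ := (haddeq x₁).1 self1
  obtain ⟨w, m, hm, hwm⟩ := (haddeq x₂).2 self2
  set A := M.infMul x₁ with hA
  set B := M.infMul x₂ with hB
  set Z := M.infMul z with hZ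
  set W := M.infMul w with hW
  have e1 : B = M.add A Z := by
    rw [hB, ← infMul_nsmul M x₂ n hn, ← hzn, infMul_add]
  have e2 : A = M.add B W := by
    rw [hA, ← infMul_nsmul M x₁ m hm, ← hwm, infMul_add]
  have e3 : A = M.add (M.add A Z) W := by conv_lhs => rw [e2, e1]
  have rc : ∀ u v t : H, M.add (M.add u v) t = M.add (M.add u t) v := fun u v t => by
    rw [add_assoc, add_comm M v t, ← add_assoc]
  have e4 : M.add (M.add A Z) Z = M.add A Z := by
    rw [add_assoc, infMul_idem]
  calc B = M.add A Z := e1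
    _ = M.add (M.add B W) Z := by rw [← e2]
    _ = M.add (M.add (M.add A Z) W) Z := by rw [e1]
    _ = M.add (M.add (M.add A Z) Z) W := rc _ _ _
    _ = M.add (M.add A Z) W := by rw [e4]
    _ = A := e3.symm

end AMAux

/-- in a two-generated ℵ₀-monoid with add(x₁) = add(x₂), every nonzero
element y = α·x₁ + β·x₂ satisfies ℵ₀·y = ℵ₀·x₁. (none stands for ℵ₀.) -/
theorem infMul_eq_of_add_eq {H : Type*} (M : AlephMonoid H) (x₁ x₂ : H)
    (hgen : ∀ h : H, ∃ α β : Option ℕ, h = M.add (M.cmul α x₁) (M.cmul β x₂))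
    (haddeq : ∀ w : H, M.inAdd x₁ w ↔ M.inAdd x₂ w)
    (α β : Option ℕ) (hne : ¬(α = some 0 ∧ β = some 0)) :
    M.infMul (M.add (M.cmul α x₁) (M.cmul β x₂)) = M.infMul x₁ := by
  open AMAux in
  have K := AMAux.infMul_x1_eq_x2 M x₁ x₂ haddeq
  rw [AMAux.infMul_add]
  have hc : ∀ (x : H) (γ : Option ℕ), M.infMul (M.cmul γ x) =
      if γ = some 0 then M.zero else M.infMul x := by
    rintro x (_ | _ | n)
    · exact AMAux.infMul_infMul M x
    · exact AMAux.infMul_zero M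
    · exact AMAux.infMul_nsmul M x (n+1) (by omega)
  rw [hc, hc]
  by_cases hα : α = some 0 <;> by_cases hβ : β = some 0 <;>
    simp [hα, hβ, K, AMAux.add_zero, AMAux.zero_add, AMAux.infMul_idem] at hne ⊢
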